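/- Let R be a commutative ring. Every Tate-continuous R-linear endomorphism f of V = R((t)) can be written as f = g + h, where g is a bounded Tate-continuous endomorphism of V and h is a discrete Tate-continuous endomorphism of V; that is, with E the ring of Tate-continuous endomorphisms and I⁺, I⁻ its ideals of bounded and discrete endomorphisms, one has E = I⁺ + I⁻. -/

import Mathlib

open HahnSeries

variable (R : Type*) [CommRing R]

/-- The standard lattice `L n ⊆ R((t))`: Laurent series whose coefficients vanish in
all degrees `< n`.  In particular `L 0 = R[[t]]`. -/
def standardLattice (n : ℤ) : Submodule R (LaurentSeries R) where
  carrier := {f | ∀ m : ℤ, m < n → f.coeff m = 0}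
  add_mem' := by
    intro a b ha hb m hm
    simp [HahnSeries.coeff_add, ha m hm, hb m hm]
  zero_mem' := by intro m hm; simp
  smul_mem' := by
    intro c a ha m hm
    simp [HahnSeries.coeff_smul, ha m hm]

/-- An `R`-linear endomorphism of `R((t))` is Tate-continuous if
(a) every standard lattice is mapped into some standard lattice, and
(b) for every standard lattice `L m` there is a standard lattice `L n` mapped into it. -/
def IsTateContinuous (φ : Module.End R (LaurentSeries R)) : Prop :=
  (∀ n : ℤ, ∃ m : ℤ, ∀ v ∈ standardLattice R n, φ v ∈ standardLattice R m) ∧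
  (∀ m : ℤ, ∃ n : ℤ, ∀ v ∈ standardLattice R n, φ v ∈ standardLattice R m)

/-- An endomorphism of `R((t))` is bounded if its range is contained in a standard lattice. -/
def IsBoundedEndo (φ : Module.End R (LaurentSeries R)) : Prop :=
  ∃ m : ℤ, ∀ v : LaurentSeries R, φ v ∈ standardLattice R m

/-- An endomorphism of `R((t))` is discrete if it vanishes on some standard lattice. -/
def IsDiscreteEndo (φ : Module.End R (LaurentSeries R)) : Prop :=
  ∃ n : ℤ, ∀ v ∈ standardLattice R n, φ v = 0

lemma mem_standardLattice_iff (n : ℤ) (v : LaurentSeries R) :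
    v ∈ standardLattice R n ↔ ∀ m : ℤ, m < n → v.coeff m = 0 := Iff.rfl

/-- Truncation: keep only coefficients in degrees `≥ n`. -/
def trunc (n : ℤ) : Module.End R (LaurentSeries R) where
  toFun v :=
    { coeff := fun k => if n ≤ k then v.coeff k else 0
      isPWO_support' := v.isPWO_support'.mono (by
        intro k hk
        simp only [Function.mem_support] at hk ⊢
        intro h
        apply hk; split <;> simp [h]) }
  map_add' a b := by
    ext k
    simp only [HahnSeries.coeff_add]
    split <;> simp
  map_smul' c a := by
    ext k
    simp only [HahnSeries.coeff_smul, RingHom.id_apply]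
    split <;> simp

lemma trunc_coeff (n : ℤ) (v : LaurentSeries R) (k : ℤ) :
    (trunc R n v).coeff k = if n ≤ k then v.coeff k else 0 := rfl

/-- Every Tate-continuous endomorphism of `R((t))` decomposes as the sum of a bounded
Tate-continuous endomorphism and a discrete Tate-continuous endomorphism: `E = I⁺ + I⁻`. -/
theorem tateContinuous_eq_bounded_add_discrete
    (f : Module.End R (LaurentSeries R)) (hf : IsTateContinuous R f) :
    ∃ g h : Module.End R (LaurentSeries R),
      IsTateContinuous R g ∧ IsBoundedEndo R g ∧
      IsTateContinuous R h ∧ IsDiscreteEndo R h ∧ f = g + h := by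
  obtain ⟨n₀, hn₀⟩ := hf.2 0
  set g : Module.End R (LaurentSeries R) := f ∘ₗ trunc R n₀ with hg
  set h : Module.End R (LaurentSeries R) := f - g with hh
  -- trunc lands in standard lattices
  have htr₁ : ∀ v : LaurentSeries R, trunc R n₀ v ∈ standardLattice R n₀ := by
    intro v m hm
    rw [trunc_coeff]
    rw [if_neg (by omega)]
  have htr₂ : ∀ n : ℤ, ∀ v ∈ standardLattice R n, trunc R n₀ v ∈ standardLattice R n := by
    intro n v hv m hm
    rw [trunc_coeff]
    split
    · exact hv m hm
    · rfl
  have hgbdd : IsBoundedEndo R g := ⟨0, fun v => hn₀ _ (htr₁ v)⟩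
  have hgTate : IsTateContinuous R g := by
    constructor
    · intro n
      exact ⟨0, fun v _ => hn₀ _ (htr₁ v)⟩
    · intro m
      obtain ⟨n, hn⟩ := hf.2 m
      exact ⟨n, fun v hv => hn _ (htr₂ n v hv)⟩
  have hzero : ∀ v ∈ standardLattice R n₀, h v = 0 := by
    intro v hv
    have : trunc R n₀ v = v := by
      ext k
      rw [trunc_coeff]
      split
      · rfl
      · exact (hv k (by omega)).symm
    simp [hh, hg, LinearMap.sub_apply, LinearMap.comp_apply, this]
  have hhdisc : IsDiscreteEndo R h := ⟨n₀, hzero⟩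
  -- monotonicity of lattices
  have hmono : ∀ a b : ℤ, b ≤ a → ∀ v ∈ standardLattice R a, v ∈ standardLattice R b := by
    intro a b hba v hv m hm
    exact hv m (by omega)
  have hhTate : IsTateContinuous R h := by
    constructor
    · intro n
      obtain ⟨m₁, hm₁⟩ := hf.1 n
      refine ⟨min m₁ 0, fun v hv => ?_⟩
      have h1 : f v ∈ standardLattice R (min m₁ 0) :=
        hmono _ _ (min_le_left _ _) _ (hm₁ v hv)
      have h2 : g v ∈ standardLattice R (min m₁ 0) :=
        hmono _ _ (min_le_right _ _) _ (hn₀ _ (htr₁ v))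
      have : h v = f v - g v := rfl
      rw [this]
      exact sub_mem h1 h2
    · intro m
      refine ⟨n₀, fun v hv => ?_⟩
      rw [hzero v hv]
      exact (standardLattice R m).zero_mem
  exact ⟨g, h, hgTate, hgbdd, hhTate, hhdisc, by rw [hh]; abel⟩
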